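/- The continuous maps f, g : S² → Conf₃(S³) defined by f(ξ) = (j(q₁), j(ξ), j(q₃)) and g(ξ) = (j(q₁), j(q₂), j(q₂ + ξ)) are well defined (their values are triples of pairwise distinct points of S³) and are homotopic as continuous maps into Conf₃(S³). (This expresses the relation β₂₁ = β₃₂ in π₂(Conf₃(S³)).) -/

import Mathlib

open Metric

noncomputable section

abbrev E3 : Type := EuclideanSpace ℝ (Fin 3)
abbrev E4 : Type := EuclideanSpace ℝ (Fin 4)

/-- `e = (1,0,0) ∈ ℝ³`. -/
def e : E3 := EuclideanSpace.single (0 : Fin 3) (1 : ℝ)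

def q1 : E3 := 0
def q2 : E3 := (4 : ℝ) • e
def q3 : E3 := (8 : ℝ) • e

/-- The unit sphere `S² ⊂ ℝ³`. -/
abbrev S2 : Type := sphere (0 : E3) 1

/-- The unit sphere `S³ ⊂ ℝ⁴`. -/
abbrev S3 : Type := sphere (0 : E4) 1

/-- Inverse stereographic projection `j : ℝ³ → ℝ⁴`, `j(x) = (2x, ‖x‖² − 1)/(‖x‖² + 1)`;
its image lies on the unit sphere `S³`, missing only the north pole `(0,0,0,1)`. -/
def jmap (x : E3) : E4 :=
  (WithLp.equiv 2 (Fin 4 → ℝ)).symm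
    ![2 * x 0 / (‖x‖ ^ 2 + 1), 2 * x 1 / (‖x‖ ^ 2 + 1), 2 * x 2 / (‖x‖ ^ 2 + 1),
      (‖x‖ ^ 2 - 1) / (‖x‖ ^ 2 + 1)]

/-- The configuration space `Conf₃(S³)` of 3 (ordered, pairwise distinct) points of `S³`,
with the subspace topology. -/
abbrev Conf3S : Type :=
  {p : S3 × S3 × S3 // p.1 ≠ p.2.1 ∧ p.1 ≠ p.2.2 ∧ p.2.1 ≠ p.2.2}

/-! ### Auxiliary material -/

lemma normsq3 (y : E3) : ‖y‖^2 = y 0^2 + y 1^2 + y 2^2 := by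
  rw [EuclideanSpace.norm_eq, Real.sq_sqrt (by positivity)]
  simp [Fin.sum_univ_three, Real.norm_eq_abs, sq_abs]

@[simp] lemma e_0 : e 0 = 1 := by simp [e, EuclideanSpace.single_apply]
@[simp] lemma e_1 : e 1 = 0 := by simp [e, EuclideanSpace.single_apply]
@[simp] lemma e_2 : e 2 = 0 := by simp [e, EuclideanSpace.single_apply]

lemma jmap_apply (x : E3) (i : Fin 4) : jmap x i =
    ![2 * x 0 / (‖x‖ ^ 2 + 1), 2 * x 1 / (‖x‖ ^ 2 + 1), 2 * x 2 / (‖x‖ ^ 2 + 1),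
      (‖x‖ ^ 2 - 1) / (‖x‖ ^ 2 + 1)] i := rfl

/-- The smooth compactified inverse stereographic projection
`K(y) = (2y, 1 - ‖y‖²)/(1 + ‖y‖²)`, so that `K y = jmap (y/‖y‖²)` and `K 0` is
the north pole. -/
def K (y : E3) : E4 :=
  (WithLp.equiv 2 (Fin 4 → ℝ)).symm
    ![2 * y 0 / (‖y‖ ^ 2 + 1), 2 * y 1 / (‖y‖ ^ 2 + 1), 2 * y 2 / (‖y‖ ^ 2 + 1),
      (1 - ‖y‖ ^ 2) / (‖y‖ ^ 2 + 1)]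

lemma K_apply (y : E3) (i : Fin 4) : K y i =
    ![2 * y 0 / (‖y‖ ^ 2 + 1), 2 * y 1 / (‖y‖ ^ 2 + 1), 2 * y 2 / (‖y‖ ^ 2 + 1),
      (1 - ‖y‖ ^ 2) / (‖y‖ ^ 2 + 1)] i := rfl

lemma K_mem (y : E3) : K y ∈ sphere (0 : E4) 1 := by
  have hn : ‖y‖^2 = y 0^2 + y 1^2 + y 2^2 := normsq3 y
  rw [mem_sphere_zero_iff_norm, EuclideanSpace.norm_eq]
  have hs : ∑ i, ‖K y i‖ ^ 2 = 1 := by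
    rw [Fin.sum_univ_four]
    simp only [K_apply, Matrix.cons_val_zero, Matrix.cons_val_one, Matrix.head_cons,
      Matrix.cons_val_two, Matrix.tail_cons, Matrix.cons_val_three, Real.norm_eq_abs, sq_abs]
    rw [div_pow, div_pow, div_pow, div_pow, ← add_div, ← add_div,
      ← add_div, div_eq_one_iff_eq (by positivity)]
    rw [hn]; ring
  rw [hs]; exact Real.sqrt_one

lemma K_cont : Continuous K := by
  have hd : ∀ y : E3, ‖y‖^2 + 1 ≠ 0 := fun y => by positivity
  have hn : Continuous fun y : E3 => ‖y‖^2 + 1 := by fun_prop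
  apply Continuous.comp (PiLp.continuous_toLp 2 (fun _ : Fin 4 => ℝ))
  refine continuous_pi fun i => ?_
  fin_cases i
  · exact
      (continuous_const.mul (PiLp.continuous_apply (p := 2) (β := fun _ : Fin 3 => ℝ) (0:Fin 3))).div hn hd
  · exact
      (continuous_const.mul (PiLp.continuous_apply (p := 2) (β := fun _ : Fin 3 => ℝ) (1:Fin 3))).div hn hd
  · exact
      (continuous_const.mul (PiLp.continuous_apply (p := 2) (β := fun _ : Fin 3 => ℝ) (2:Fin 3))).div hn hd
  · exact
      (continuous_const.sub (continuous_norm.pow 2)).div hn hd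

lemma K_inj : Function.Injective K := by
  intro y z h
  have hny : (0:ℝ) < ‖y‖^2 + 1 := by positivity
  have hnz : (0:ℝ) < ‖z‖^2 + 1 := by positivity
  have h3 : K y 3 = K z 3 := by rw [h]
  simp only [K_apply, Matrix.cons_val_three, Matrix.tail_cons, Matrix.head_cons] at h3
  rw [div_eq_div_iff hny.ne' hnz.ne'] at h3
  have hnn : ‖y‖^2 = ‖z‖^2 := by nlinarith [h3]
  have hz' : (‖z‖^2 + 1) ≠ 0 := hnz.ne'
  have h0 : K y 0 = K z 0 := by rw [h]
  have h1 : K y 1 = K z 1 := by rw [h]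
  have h2 : K y 2 = K z 2 := by rw [h]
  simp only [K_apply, Matrix.cons_val_zero, Matrix.cons_val_one, Matrix.head_cons,
    Matrix.cons_val_two, Matrix.tail_cons] at h0 h1 h2
  rw [hnn, div_eq_div_iff hz' hz'] at h0 h1 h2
  have e0 := mul_right_cancel₀ hz' h0
  have e1 := mul_right_cancel₀ hz' h1
  have e2 := mul_right_cancel₀ hz' h2
  ext i
  fin_cases i
  · exact mul_left_cancel₀ (two_ne_zero) e0
  · exact mul_left_cancel₀ (two_ne_zero) e1
  · exact mul_left_cancel₀ (two_ne_zero) e2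

lemma K_ne_jq1 (y : E3) : K y ≠ jmap q1 := by
  intro h
  have h3 : K y 3 = jmap q1 3 := by rw [h]
  have hq : jmap q1 3 = -1 := by
    simp only [jmap_apply, Matrix.cons_val_three, Matrix.tail_cons, Matrix.head_cons, q1]
    norm_num
  rw [hq] at h3
  simp only [K_apply, Matrix.cons_val_three, Matrix.tail_cons, Matrix.head_cons] at h3
  have hny : (0:ℝ) < ‖y‖^2 + 1 := by positivity
  rw [div_eq_iff hny.ne'] at h3
  nlinarith [sq_nonneg ‖y‖]

lemma jq1_mem : jmap q1 ∈ sphere (0 : E4) 1 := by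
  rw [mem_sphere_zero_iff_norm, EuclideanSpace.norm_eq]
  have hs : ∑ i, ‖jmap q1 i‖ ^ 2 = 1 := by
    rw [Fin.sum_univ_four]
    simp only [jmap_apply, Matrix.cons_val_zero, Matrix.cons_val_one, Matrix.head_cons,
      Matrix.cons_val_two, Matrix.tail_cons, Matrix.cons_val_three, Real.norm_eq_abs, sq_abs, q1]
    norm_num
  rw [hs]; exact Real.sqrt_one

lemma K_eq_jmap_of_unit {y : E3} (h : ‖y‖ = 1) : K y = jmap y := by
  ext i
  fin_cases i <;> simp [K_apply, jmap_apply, h]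

lemma K_inv {x : E3} (hx : x ≠ 0) : K ((‖x‖^2)⁻¹ • x) = jmap x := by
  have hx0 : (0:ℝ) < ‖x‖ := norm_pos_iff.mpr hx
  have hn : (0:ℝ) < ‖x‖^2 := by positivity
  have hns : ‖(‖x‖^2)⁻¹ • x‖^2 = (‖x‖^2)⁻¹ := by
    rw [norm_smul, Real.norm_eq_abs, abs_of_pos (by positivity)]
    field_simp
  have hcoord : ∀ i : Fin 3, ((‖x‖^2)⁻¹ • x) i = (‖x‖^2)⁻¹ * x i := fun i => rfl
  have hn0 : (‖x‖^2 : ℝ) ≠ 0 := hn.ne'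
  have hn1 : (‖x‖^2 + 1 : ℝ) ≠ 0 := by positivity
  have hn2 : ((‖x‖^2)⁻¹ + 1 : ℝ) ≠ 0 := by positivity
  have h0 : K ((‖x‖^2)⁻¹ • x) 0 = jmap x 0 := by
    rw [K_apply, jmap_apply]
    simp only [Matrix.cons_val_zero, hns, hcoord]
    rw [div_eq_div_iff hn2 hn1]
    field_simp
    try ring
    try simp
  have h1 : K ((‖x‖^2)⁻¹ • x) 1 = jmap x 1 := by
    rw [K_apply, jmap_apply]
    simp only [Matrix.cons_val_one, Matrix.cons_val_zero, Matrix.head_cons, hns, hcoord]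
    rw [div_eq_div_iff hn2 hn1]
    field_simp
    try ring
    try simp
  have h2 : K ((‖x‖^2)⁻¹ • x) 2 = jmap x 2 := by
    rw [K_apply, jmap_apply]
    simp only [Matrix.cons_val_two, Matrix.tail_cons, Matrix.head_cons, hns, hcoord]
    rw [div_eq_div_iff hn2 hn1]
    field_simp
    try ring
    try simp
  have h3 : K ((‖x‖^2)⁻¹ • x) 3 = jmap x 3 := by
    rw [K_apply, jmap_apply]
    simp only [Matrix.cons_val_three, Matrix.tail_cons, Matrix.head_cons, hns, hcoord]
    rw [div_eq_div_iff hn2 hn1]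
    field_simp
    try ring
    try simp
  ext i
  fin_cases i
  · exact h0
  · exact h1
  · exact h2
  · exact h3

/-! ### Points and configurations -/

def Spt : S3 := ⟨jmap q1, jq1_mem⟩

def KS (y : E3) : S3 := ⟨K y, K_mem y⟩

lemma KS_cont : Continuous KS := K_cont.subtype_mk _

def mkC (y2 y3 : E3) (h : y2 ≠ y3) : Conf3S :=
  ⟨(Spt, KS y2, KS y3),
    fun hc => K_ne_jq1 y2 (congrArg Subtype.val hc).symm,
    fun hc => K_ne_jq1 y3 (congrArg Subtype.val hc).symm,
    fun hc => h (K_inj (congrArg Subtype.val hc))⟩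

lemma mkC_congr {a b a' b' : E3} {h : a ≠ b} {h' : a' ≠ b'} (ha : a = a') (hb : b = b') :
    mkC a b h = mkC a' b' h' := by subst ha; subst hb; rfl

lemma mkC_fst (y2 y3 : E3) (h : y2 ≠ y3) : ((mkC y2 y3 h).1.1 : E4) = jmap q1 := rfl
lemma mkC_snd (y2 y3 : E3) (h : y2 ≠ y3) : ((mkC y2 y3 h).1.2.1 : E4) = K y2 := rfl
lemma mkC_trd (y2 y3 : E3) (h : y2 ≠ y3) : ((mkC y2 y3 h).1.2.2 : E4) = K y3 := rfl

lemma sq_sum_of_S2 (x : S2) : ((x:E3) 0)^2 + ((x:E3) 1)^2 + ((x:E3) 2)^2 = 1 := by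
  have h : ‖(x:E3)‖ = 1 := mem_sphere_zero_iff_norm.mp x.2
  have := normsq3 (x:E3)
  rw [h] at this
  nlinarith [this]

/-! ### The five stages -/

-- difference-nonvanishing lemmas (stated for generic real parameters)

section stages

variable (x : S2)

/-- Stage maps `S² → Conf₃(S³)`.  In each of these the first point is `j(q₁)`,
and the remaining two points are `K y₂`, `K y₃`. -/

lemma neF0 : (x : E3) ≠ (8:ℝ)⁻¹ • e := by
  intro h
  have h0 : (x:E3) 0 = ((8:ℝ)⁻¹ • e) 0 := by rw [h]
  have h1 : (x:E3) 1 = ((8:ℝ)⁻¹ • e) 1 := by rw [h]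
  have h2 : (x:E3) 2 = ((8:ℝ)⁻¹ • e) 2 := by rw [h]
  simp only [PiLp.smul_apply, smul_eq_mul, e_0, e_1, e_2, mul_one, mul_zero] at h0 h1 h2
  nlinarith [sq_sum_of_S2 x]

lemma neF1 : (x : E3) ≠ (0 : E3) := by
  intro h
  have h0 : (x:E3) 0 = (0:E3) 0 := by rw [h]
  have h1 : (x:E3) 1 = (0:E3) 1 := by rw [h]
  have h2 : (x:E3) 2 = (0:E3) 2 := by rw [h]
  simp only [PiLp.zero_apply] at h0 h1 h2
  nlinarith [sq_sum_of_S2 x]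

lemma neF2 : (x : E3) ≠ (2:ℝ) • ((x:E3) - ((x:E3) 0) • e) := by
  intro h
  have h0 : (x:E3) 0 = ((2:ℝ) • ((x:E3) - ((x:E3) 0) • e)) 0 := by rw [← h]
  have h1 : (x:E3) 1 = ((2:ℝ) • ((x:E3) - ((x:E3) 0) • e)) 1 := by rw [← h]
  have h2 : (x:E3) 2 = ((2:ℝ) • ((x:E3) - ((x:E3) 0) • e)) 2 := by rw [← h]
  simp only [PiLp.smul_apply, PiLp.sub_apply, smul_eq_mul, e_0, e_1, e_2,
    mul_one, mul_zero, sub_zero] at h0 h1 h2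
  nlinarith [sq_sum_of_S2 x]

lemma neF3 : (x : E3) ≠
    (31/16 : ℝ) • (x:E3) - (1/2 + 2 * ((x:E3) 0)) • e := by
  intro h
  have h0 := congrFun (congrArg (WithLp.equiv 2 (Fin 3 → ℝ)) h) 0
  have h1 := congrFun (congrArg (WithLp.equiv 2 (Fin 3 → ℝ)) h) 1
  have h2 := congrFun (congrArg (WithLp.equiv 2 (Fin 3 → ℝ)) h) 2
  simp only [WithLp.equiv_apply, PiLp.smul_apply, PiLp.sub_apply, smul_eq_mul,
    e_0, e_1, e_2, mul_one, mul_zero, sub_zero] at h0 h1 h2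
  have hb : (x:E3) 1 = 0 := by linarith
  have hc : (x:E3) 2 = 0 := by linarith
  have ha := sq_sum_of_S2 x
  rw [hb, hc] at ha
  have : ((x:E3) 0 - 1) * ((x:E3) 0 + 1) = 0 := by nlinarith
  rcases mul_eq_zero.mp this with h' | h' <;> nlinarith [h0]

lemma neF4 : (4:ℝ)⁻¹ • e ≠ (17 + 8 * ((x:E3) 0))⁻¹ • ((4:ℝ) • e + (x:E3)) := by
  intro h
  have ha := sq_sum_of_S2 x
  have hD : (0:ℝ) < 17 + 8 * ((x:E3) 0) := by nlinarith
  have h0 := congrFun (congrArg (WithLp.equiv 2 (Fin 3 → ℝ)) h) 0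
  have h1 := congrFun (congrArg (WithLp.equiv 2 (Fin 3 → ℝ)) h) 1
  have h2 := congrFun (congrArg (WithLp.equiv 2 (Fin 3 → ℝ)) h) 2
  simp only [WithLp.equiv_apply, PiLp.smul_apply, PiLp.add_apply, smul_eq_mul,
    e_0, e_1, e_2, mul_one, mul_zero, add_zero, zero_add] at h0 h1 h2
  rw [inv_mul_eq_div, eq_div_iff hD.ne'] at h0 h1 h2
  have hb : (x:E3) 1 = 0 := by nlinarith [h1]
  have hc : (x:E3) 2 = 0 := by nlinarith [h2]
  rw [hb, hc] at ha
  nlinarith [h0]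

end stages

def F0 : C(S2, Conf3S) :=
  ⟨fun x => mkC (x : E3) ((8:ℝ)⁻¹ • e) (neF0 x),
   by
    apply Continuous.subtype_mk
    exact continuous_const.prodMk
      ((KS_cont.comp continuous_subtype_val).prodMk continuous_const)⟩

def F1 : C(S2, Conf3S) :=
  ⟨fun x => mkC (x : E3) 0 (neF1 x),
   by
    apply Continuous.subtype_mk
    exact continuous_const.prodMk
      ((KS_cont.comp continuous_subtype_val).prodMk continuous_const)⟩

def F2 : C(S2, Conf3S) :=
  ⟨fun x => mkC (x : E3) ((2:ℝ) • ((x:E3) - ((x:E3) 0) • e)) (neF2 x),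
   by
    apply Continuous.subtype_mk
    refine continuous_const.prodMk (((KS_cont.comp continuous_subtype_val)).prodMk ?_)
    apply KS_cont.comp
    fun_prop⟩

def F3 : C(S2, Conf3S) :=
  ⟨fun x => mkC (x : E3) ((31/16 : ℝ) • (x:E3) - (1/2 + 2 * ((x:E3) 0)) • e) (neF3 x),
   by
    apply Continuous.subtype_mk
    refine continuous_const.prodMk (((KS_cont.comp continuous_subtype_val)).prodMk ?_)
    apply KS_cont.comp
    fun_prop⟩

def F4 : C(S2, Conf3S) :=
  ⟨fun x => mkC ((4:ℝ)⁻¹ • e) ((17 + 8 * ((x:E3) 0))⁻¹ • ((4:ℝ) • e + (x:E3))) (neF4 x),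
   by
    apply Continuous.subtype_mk
    refine continuous_const.prodMk (continuous_const.prodMk ?_)
    apply KS_cont.comp
    refine Continuous.smul (f := fun x : S2 => (17 + 8 * ((x:E3) 0))⁻¹) ?_ (continuous_const.add continuous_subtype_val)
    refine Continuous.inv₀ ?_ ?_
    · exact continuous_const.add (continuous_const.mul
        ((PiLp.continuous_apply (p := 2) (β := fun _ : Fin 3 => ℝ) (0:Fin 3)).comp continuous_subtype_val))
    · intro x
      have := sq_sum_of_S2 x
      nlinarith⟩

/-! ### Cross product with `e`, used in stage 2 -/

def cxe (y : E3) : E3 := (WithLp.equiv 2 (Fin 3 → ℝ)).symm ![0, -(y 2), y 1]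

@[simp] lemma cxe_0 (y : E3) : cxe y 0 = 0 := rfl
@[simp] lemma cxe_1 (y : E3) : cxe y 1 = -(y 2) := rfl
@[simp] lemma cxe_2 (y : E3) : cxe y 2 = y 1 := rfl

lemma cxe_cont : Continuous cxe := by
  apply Continuous.comp (PiLp.continuous_toLp 2 (fun _ : Fin 3 => ℝ))
  refine continuous_pi fun i => ?_
  fin_cases i
  · exact continuous_const
  · exact (PiLp.continuous_apply (p := 2) (β := fun _ : Fin 3 => ℝ) (2:Fin 3)).neg
  · exact
      (PiLp.continuous_apply (p := 2) (β := fun _ : Fin 3 => ℝ) (1:Fin 3))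

/-! ### The four homotopies -/

section homotopies
open unitInterval

lemma neH1 (p : I × S2) : ((p.2 : E3)) ≠ ((1 - (p.1 : ℝ))/8) • e := by
  intro h
  have ht0 : (0:ℝ) ≤ (p.1:ℝ) := p.1.2.1
  have ht1 : ((p.1:ℝ)) ≤ 1 := p.1.2.2
  have h0 := congrFun (congrArg (WithLp.equiv 2 (Fin 3 → ℝ)) h) 0
  have h1 := congrFun (congrArg (WithLp.equiv 2 (Fin 3 → ℝ)) h) 1
  have h2 := congrFun (congrArg (WithLp.equiv 2 (Fin 3 → ℝ)) h) 2
  simp only [WithLp.equiv_apply, PiLp.smul_apply, smul_eq_mul, e_0, e_1, e_2,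
    mul_one, mul_zero] at h0 h1 h2
  nlinarith [sq_sum_of_S2 p.2]

lemma neH2 (p : I × S2) : ((p.2 : E3)) ≠
    (1 + Real.cos (Real.pi * (1 - (p.1:ℝ)))) • ((p.2:E3) - ((p.2:E3) 0) • e)
      + (Real.sin (Real.pi * (1 - (p.1:ℝ)))) • cxe (p.2:E3) := by
  intro h
  set C := Real.cos (Real.pi * (1 - (p.1:ℝ))) with hC
  set S := Real.sin (Real.pi * (1 - (p.1:ℝ))) with hS
  have h0 := congrFun (congrArg (WithLp.equiv 2 (Fin 3 → ℝ)) h) 0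
  have h1 := congrFun (congrArg (WithLp.equiv 2 (Fin 3 → ℝ)) h) 1
  have h2 := congrFun (congrArg (WithLp.equiv 2 (Fin 3 → ℝ)) h) 2
  simp only [WithLp.equiv_apply, PiLp.add_apply, PiLp.sub_apply, PiLp.smul_apply,
    smul_eq_mul, e_0, e_1, e_2, cxe_0, cxe_1, cxe_2, mul_one, mul_zero, sub_zero,
    sub_self, add_zero, mul_neg] at h0 h1 h2
  have hcs : S^2 + C^2 = 1 := Real.sin_sq_add_cos_sq _
  have e1 : C * ((p.2:E3) 1) - S * ((p.2:E3) 2) = 0 := by nlinarith [h1]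
  have e2 : C * ((p.2:E3) 2) + S * ((p.2:E3) 1) = 0 := by nlinarith [h2]
  have key : ((p.2:E3) 1)^2 + ((p.2:E3) 2)^2
      = (C * ((p.2:E3) 1) - S * ((p.2:E3) 2))^2 + (C * ((p.2:E3) 2) + S * ((p.2:E3) 1))^2 := by
    linear_combination (-(((p.2:E3) 1)^2 + ((p.2:E3) 2)^2)) * hcs
  rw [e1, e2] at key
  nlinarith [sq_sum_of_S2 p.2, h0, key]

lemma neH3 (p : I × S2) : ((p.2 : E3)) ≠
    (2 - ((p.1:ℝ)/4)^2) • (p.2:E3) - (2*((p.1:ℝ)/4) + 2*((p.2:E3) 0)) • e := by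
  intro h
  have ht0 : (0:ℝ) ≤ (p.1:ℝ) := p.1.2.1
  have ht1 : ((p.1:ℝ)) ≤ 1 := p.1.2.2
  set β := ((p.1:ℝ)/4) with hβ
  have hβ0 : 0 ≤ β := by positivity
  have hβ1 : β ≤ 1/4 := by rw [hβ]; linarith
  have h0 := congrFun (congrArg (WithLp.equiv 2 (Fin 3 → ℝ)) h) 0
  have h1 := congrFun (congrArg (WithLp.equiv 2 (Fin 3 → ℝ)) h) 1
  have h2 := congrFun (congrArg (WithLp.equiv 2 (Fin 3 → ℝ)) h) 2
  simp only [WithLp.equiv_apply, PiLp.sub_apply, PiLp.smul_apply, smul_eq_mul,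
    e_0, e_1, e_2, mul_one, mul_zero, sub_zero] at h0 h1 h2
  have hf : (1 - β^2) ≠ 0 := by nlinarith
  have hb : (p.2:E3) 1 = 0 := by
    have hz : ((p.2:E3) 1) * (1 - β^2) = 0 := by linear_combination (-1:ℝ) * h1
    exact (mul_eq_zero.mp hz).resolve_right hf
  have hc : (p.2:E3) 2 = 0 := by
    have hz : ((p.2:E3) 2) * (1 - β^2) = 0 := by linear_combination (-1:ℝ) * h2
    exact (mul_eq_zero.mp hz).resolve_right hf
  have ha := sq_sum_of_S2 p.2
  rw [hb, hc] at ha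
  have hsq : (((p.2:E3) 0) - 1) * (((p.2:E3) 0) + 1) = 0 := by linear_combination ha
  rcases mul_eq_zero.mp hsq with h' | h' <;> nlinarith [h0]

lemma neH4 (p : I × S2) :
    ((1 - (p.1:ℝ)) • (p.2:E3) + ((p.1:ℝ)/4) • e) ≠
    ((1 - (p.1:ℝ)) • (p.2:E3) + ((p.1:ℝ)/4) • e) +
      ((1 - (p.1:ℝ)) • ((15/16:ℝ) • (p.2:E3) - (1/2 + 2*((p.2:E3) 0)) • e)
        + (p.1:ℝ) • ((17 + 8*((p.2:E3) 0))⁻¹ • ((4:ℝ) • e + (p.2:E3)) - (4:ℝ)⁻¹ • e)) := by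
  intro h
  have ht0 : (0:ℝ) ≤ (p.1:ℝ) := p.1.2.1
  have ht1 : ((p.1:ℝ)) ≤ 1 := p.1.2.2
  have ha := sq_sum_of_S2 p.2
  have hD : (0:ℝ) < 17 + 8 * ((p.2:E3) 0) := by nlinarith
  set s := (17 + 8 * ((p.2:E3) 0))⁻¹ with hs_def
  have hs : (0:ℝ) < s := inv_pos.mpr hD
  have hsD : s * (17 + 8 * ((p.2:E3) 0)) = 1 := inv_mul_cancel₀ hD.ne'
  have h0 := congrFun (congrArg (WithLp.equiv 2 (Fin 3 → ℝ)) h) 0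
  have h1 := congrFun (congrArg (WithLp.equiv 2 (Fin 3 → ℝ)) h) 1
  have h2 := congrFun (congrArg (WithLp.equiv 2 (Fin 3 → ℝ)) h) 2
  simp only [WithLp.equiv_apply, PiLp.add_apply, PiLp.sub_apply, PiLp.smul_apply,
    smul_eq_mul, e_0, e_1, e_2, mul_one, mul_zero, add_zero, zero_add, sub_zero] at h0 h1 h2
  -- positivity of the coefficient
  have hμ : (0:ℝ) < (15/16) * (1 - (p.1:ℝ)) + (p.1:ℝ) * s := by
    rcases lt_or_ge (p.1:ℝ) 1 with h' | h'
    · nlinarith [mul_nonneg ht0 hs.le]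
    · have : (p.1:ℝ) = 1 := le_antisymm ht1 h'
      rw [this]; simpa using hs
  have hb : (p.2:E3) 1 = 0 := by
    have hz : ((p.2:E3) 1) * ((15/16) * (1 - (p.1:ℝ)) + (p.1:ℝ) * s) = 0 := by
      linear_combination (-1:ℝ) * h1
    exact (mul_eq_zero.mp hz).resolve_right hμ.ne'
  have hc : (p.2:E3) 2 = 0 := by
    have hz : ((p.2:E3) 2) * ((15/16) * (1 - (p.1:ℝ)) + (p.1:ℝ) * s) = 0 := by
      linear_combination (-1:ℝ) * h2
    exact (mul_eq_zero.mp hz).resolve_right hμ.ne'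
  rw [hb, hc] at ha
  have hsq : (((p.2:E3) 0) - 1) * (((p.2:E3) 0) + 1) = 0 := by linear_combination ha
  rcases mul_eq_zero.mp hsq with h' | h'
  · -- a = 1, s = 1/25
    have ha1 : (p.2:E3) 0 = 1 := by linarith
    rw [ha1] at hsD h0
    have hs25 : s = 1/25 := by linarith [hsD]
    rw [hs25] at h0
    nlinarith [h0]
  · -- a = -1, s = 1/9
    have ha1 : (p.2:E3) 0 = -1 := by linarith
    rw [ha1] at hsD h0
    have hs9 : s = 1/9 := by linarith [hsD]
    rw [hs9] at h0
    nlinarith [h0]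

-- continuity helpers
lemma cont_t : Continuous fun p : I × S2 => ((p.1:ℝ)) :=
  continuous_subtype_val.comp continuous_fst

lemma cont_x : Continuous fun p : I × S2 => ((p.2:E3)) :=
  continuous_subtype_val.comp continuous_snd

lemma cont_x0 : Continuous fun p : I × S2 => ((p.2:E3) 0) :=
  (PiLp.continuous_apply (p := 2) (β := fun _ : Fin 3 => ℝ) (0 : Fin 3)).comp cont_x

def G1 : F0.Homotopy F1 where
  toFun := fun p => mkC ((p.2:E3)) (((1 - (p.1:ℝ))/8) • e) (neH1 p)
  continuous_toFun := by
    apply Continuous.subtype_mk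
    refine continuous_const.prodMk (((KS_cont.comp cont_x)).prodMk ?_)
    exact KS_cont.comp (((continuous_const.sub cont_t).div_const 8).smul continuous_const)
  map_zero_left := by
    intro x
    show mkC _ _ (neH1 (0, x)) = mkC _ _ (neF0 x)
    exact mkC_congr rfl (by norm_num)
  map_one_left := by
    intro x
    show mkC _ _ (neH1 (1, x)) = mkC _ _ (neF1 x)
    exact mkC_congr rfl (by norm_num)

def G2 : F1.Homotopy F2 where
  toFun := fun p => mkC ((p.2:E3))
    ((1 + Real.cos (Real.pi * (1 - (p.1:ℝ)))) • ((p.2:E3) - ((p.2:E3) 0) • e)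
      + (Real.sin (Real.pi * (1 - (p.1:ℝ)))) • cxe (p.2:E3)) (neH2 p)
  continuous_toFun := by
    apply Continuous.subtype_mk
    refine continuous_const.prodMk (((KS_cont.comp cont_x)).prodMk ?_)
    apply KS_cont.comp
    refine Continuous.add ?_ ?_
    · exact (continuous_const.add (Real.continuous_cos.comp
        (continuous_const.mul (continuous_const.sub cont_t)))).smul
        (cont_x.sub (cont_x0.smul continuous_const))
    · exact (Real.continuous_sin.comp
        (continuous_const.mul (continuous_const.sub cont_t))).smul (cxe_cont.comp cont_x)
  map_zero_left := by
    intro x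
    show mkC _ _ (neH2 (0, x)) = mkC _ _ (neF1 x)
    exact mkC_congr rfl (by norm_num [Real.cos_pi, Real.sin_pi]; try module)
  map_one_left := by
    intro x
    show mkC _ _ (neH2 (1, x)) = mkC _ _ (neF2 x)
    exact mkC_congr rfl (by norm_num [Real.cos_zero, Real.sin_zero]; try module)

def G3 : F2.Homotopy F3 where
  toFun := fun p => mkC ((p.2:E3))
    ((2 - ((p.1:ℝ)/4)^2) • (p.2:E3) - (2*((p.1:ℝ)/4) + 2*((p.2:E3) 0)) • e) (neH3 p)
  continuous_toFun := by
    apply Continuous.subtype_mk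
    refine continuous_const.prodMk (((KS_cont.comp cont_x)).prodMk ?_)
    apply KS_cont.comp
    refine Continuous.sub ?_ ?_
    · exact (continuous_const.sub ((cont_t.div_const 4).pow 2)).smul cont_x
    · exact ((continuous_const.mul (cont_t.div_const 4)).add
        (continuous_const.mul cont_x0)).smul continuous_const
  map_zero_left := by
    intro x
    show mkC _ _ (neH3 (0, x)) = mkC _ _ (neF2 x)
    exact mkC_congr rfl (by norm_num; try module)
  map_one_left := by
    intro x
    show mkC _ _ (neH3 (1, x)) = mkC _ _ (neF3 x)
    exact mkC_congr rfl (by norm_num; try module)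

def G4 : F3.Homotopy F4 where
  toFun := fun p => mkC
    ((1 - (p.1:ℝ)) • (p.2:E3) + ((p.1:ℝ)/4) • e)
    (((1 - (p.1:ℝ)) • (p.2:E3) + ((p.1:ℝ)/4) • e) +
      ((1 - (p.1:ℝ)) • ((15/16:ℝ) • (p.2:E3) - (1/2 + 2*((p.2:E3) 0)) • e)
        + (p.1:ℝ) • ((17 + 8*((p.2:E3) 0))⁻¹ • ((4:ℝ) • e + (p.2:E3)) - (4:ℝ)⁻¹ • e)))
    (neH4 p)
  continuous_toFun := by
    have hD : ∀ p : I × S2, (17 + 8 * ((p.2:E3) 0)) ≠ 0 := by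
      intro p
      have := sq_sum_of_S2 p.2
      nlinarith
    have c2 : Continuous fun p : I × S2 => (1 - (p.1:ℝ)) • (p.2:E3) + ((p.1:ℝ)/4) • e :=
      ((continuous_const.sub cont_t).smul cont_x).add ((cont_t.div_const 4).smul continuous_const)
    have c3 : Continuous fun p : I × S2 =>
        ((1 - (p.1:ℝ)) • ((15/16:ℝ) • (p.2:E3) - (1/2 + 2*((p.2:E3) 0)) • e)
          + (p.1:ℝ) • ((17 + 8*((p.2:E3) 0))⁻¹ • ((4:ℝ) • e + (p.2:E3)) - (4:ℝ)⁻¹ • e)) := by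
      refine Continuous.add ?_ ?_
      · fun_prop
      · refine cont_t.smul (Continuous.sub ?_ continuous_const)
        exact (((continuous_const.add (continuous_const.mul cont_x0)).inv₀ hD)).smul
          (continuous_const.add cont_x)
    apply Continuous.subtype_mk
    exact continuous_const.prodMk ((KS_cont.comp c2).prodMk (KS_cont.comp (c2.add c3)))
  map_zero_left := by
    intro x
    show mkC _ _ (neH4 (0, x)) = mkC _ _ (neF3 x)
    exact mkC_congr (by norm_num) (by norm_num; try module)
  map_one_left := by
    intro x
    show mkC _ _ (neH4 (1, x)) = mkC _ _ (neF4 x)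
    exact mkC_congr (by norm_num) (by norm_num; try module)

end homotopies

theorem beta21_eq_beta32_in_conf3_sphere :
    ∃ f g : C(S2, Conf3S),
      (∀ ξ : S2,
        ((f ξ).1.1 : E4) = jmap q1 ∧
        ((f ξ).1.2.1 : E4) = jmap (ξ : E3) ∧
        ((f ξ).1.2.2 : E4) = jmap q3) ∧
      (∀ ξ : S2,
        ((g ξ).1.1 : E4) = jmap q1 ∧
        ((g ξ).1.2.1 : E4) = jmap q2 ∧
        ((g ξ).1.2.2 : E4) = jmap (q2 + (ξ : E3))) ∧
      f.Homotopic g := by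
  have he : ‖e‖ = 1 := by
    rw [e, EuclideanSpace.norm_single]; norm_num
  have hq3n : ‖q3‖ = 8 := by
    rw [q3, norm_smul, he, Real.norm_eq_abs]; norm_num
  have hq2n : ‖q2‖ = 4 := by
    rw [q2, norm_smul, he, Real.norm_eq_abs]; norm_num
  have hq3ne : q3 ≠ 0 := by
    intro h; rw [h, norm_zero] at hq3n; norm_num at hq3n
  have hq2ne : q2 ≠ 0 := by
    intro h; rw [h, norm_zero] at hq2n; norm_num at hq2n
  refine ⟨F0, F4, ?_, ?_, ⟨((G1.trans G2).trans G3).trans G4⟩⟩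
  · intro ξ
    refine ⟨rfl, ?_, ?_⟩
    · exact K_eq_jmap_of_unit (mem_sphere_zero_iff_norm.mp ξ.2)
    · show K ((8:ℝ)⁻¹ • e) = jmap q3
      rw [← K_inv hq3ne]
      congr 1
      rw [hq3n, q3, smul_smul]
      norm_num
  · intro ξ
    have ha := sq_sum_of_S2 ξ
    have hq2x : ‖q2 + (ξ:E3)‖^2 = 17 + 8 * ((ξ:E3) 0) := by
      rw [normsq3]
      have h0 : (q2 + (ξ:E3)) 0 = 4 + (ξ:E3) 0 := by
        simp [q2, PiLp.add_apply, PiLp.smul_apply]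
      have h1 : (q2 + (ξ:E3)) 1 = (ξ:E3) 1 := by
        simp [q2, PiLp.add_apply, PiLp.smul_apply]
      have h2 : (q2 + (ξ:E3)) 2 = (ξ:E3) 2 := by
        simp [q2, PiLp.add_apply, PiLp.smul_apply]
      rw [h0, h1, h2]
      nlinarith [ha]
    have hq2xne : q2 + (ξ:E3) ≠ 0 := by
      intro h
      rw [h] at hq2x
      simp only [norm_zero] at hq2x
      nlinarith [hq2x, ha]
    refine ⟨rfl, ?_, ?_⟩
    · show K ((4:ℝ)⁻¹ • e) = jmap q2
      rw [← K_inv hq2ne]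
      congr 1
      rw [hq2n, q2, smul_smul]
      norm_num
    · show K ((17 + 8*((ξ:E3) 0))⁻¹ • ((4:ℝ) • e + (ξ:E3))) = jmap (q2 + (ξ:E3))
      rw [← K_inv hq2xne]
      congr 1
      rw [hq2x, q2]

end
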